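/- Let σ ∈ (0,2) and π ∈ 𝔄^σ satisfy ∫_{|z|≤1}|z|^{α₁}π(dz) + ∫_{|z|>1}|z|^{α₂}π(dz) ≤ N, where α₁, α₂ ∈ (0,1] if σ ∈ (0,1); α₁, α₂ ∈ (1,2] if σ ∈ (1,2); and α₁ ∈ (1,2], α₂ ∈ [0,1) if σ = 1. Let t > 0 and let 𝓛_t be a probability measure on ℝ^d whose Fourier transform equals exp{t ψ^π(ξ)} for all ξ. Then for each δ > 0 there is a constant C = C(δ,N), independent of t, such that 𝓛_t({y : |y| > δ}) ≤ C t. -/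

import Mathlib

open MeasureTheory
open scoped ENNReal RealInnerProductSpace

noncomputable section

abbrev Rd (d : ℕ) := EuclideanSpace ℝ (Fin d)

variable {d : ℕ}

/-- The truncation function `χ_σ`. -/
def chiSigma (σ : ℝ) (y : Rd d) : ℝ :=
  if σ < 1 then 0 else if σ = 1 then (if ‖y‖ ≤ 1 then 1 else 0) else 1

/-- Membership in the class `𝔄^σ`. -/
def MemA (σ : ℝ) (ν : Measure (Rd d)) : Prop :=
  ν {0} = 0 ∧
  (∫⁻ y, ENNReal.ofReal (min (‖y‖ ^ 2) 1) ∂ν) < ∞ ∧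
  σ = sInf {α : ℝ | α < 2 ∧ (∫⁻ y in {y : Rd d | ‖y‖ ≤ 1}, ENNReal.ofReal (‖y‖ ^ α) ∂ν) < ∞} ∧
  (1 < σ → (∫⁻ y in {y : Rd d | 1 < ‖y‖}, ENNReal.ofReal ‖y‖ ∂ν) < ∞) ∧
  (σ = 1 → ∀ R R' : ℝ, 0 < R → R < R' →
    (∫ y in {y : Rd d | R < ‖y‖ ∧ ‖y‖ ≤ R'}, y ∂ν) = 0)

/-- The symbol `ψ^π`. -/
def symb (σ : ℝ) (ν : Measure (Rd d)) (ξ : Rd d) : ℂ :=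
  ∫ y, (Complex.exp (Complex.I * ((2 * Real.pi * ⟪ξ, y⟫ : ℝ) : ℂ))
        - 1 - Complex.I * ((2 * Real.pi * chiSigma σ y * ⟪ξ, y⟫ : ℝ) : ℂ)) ∂ν

/-- The Fourier transform of a finite measure, `ξ ↦ ∫ e^{i2πξ·x} μ(dx)`. -/
def charFun (μ : Measure (Rd d)) (ξ : Rd d) : ℂ :=
  ∫ x, Complex.exp (Complex.I * ((2 * Real.pi * ⟪ξ, x⟫ : ℝ) : ℂ)) ∂μ

open Complex in
lemma trig0 (θ α : ℝ) (h0 : 0 ≤ α) (h1 : α ≤ 1) :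
    ‖Complex.exp (Complex.I * (θ:ℂ)) - 1‖ ≤ 3 * |θ| ^ α := by
  rcases eq_or_ne θ 0 with rfl | hθ
  · simp
    positivity
  have habs : (0:ℝ) < |θ| := abs_pos.2 hθ
  rcases le_or_gt (|θ|) 1 with hle | hgt
  · have h2 : ‖Complex.exp (Complex.I * (θ:ℂ)) - 1‖ ≤ 2 * |θ| := by
      have hiz : ‖Complex.I * (θ:ℂ)‖ = |θ| := by simp
      have := Complex.norm_exp_sub_one_le (x := Complex.I * (θ:ℂ)) (by rw [hiz]; exact hle)
      rw [hiz] at this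
      simpa using this
    have h3 : |θ| ≤ |θ| ^ α := by
      calc |θ| = |θ| ^ (1:ℝ) := (Real.rpow_one _).symm
      _ ≤ |θ| ^ α := Real.rpow_le_rpow_of_exponent_ge habs hle h1
    nlinarith [Real.rpow_nonneg (abs_nonneg θ) α]
  · have h2 : ‖Complex.exp (Complex.I * (θ:ℂ)) - 1‖ ≤ 2 := by
      calc ‖Complex.exp (Complex.I * (θ:ℂ)) - 1‖ ≤ ‖Complex.exp (Complex.I * (θ:ℂ))‖ + 1 := by
            simpa using norm_sub_le (Complex.exp (Complex.I * (θ:ℂ))) 1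
      _ ≤ 2 := by
            rw [Complex.norm_exp]
            simp
            norm_num
    have h3 : (1:ℝ) ≤ |θ| ^ α := Real.one_le_rpow hgt.le h0
    nlinarith
lemma trig1 (θ α : ℝ) (h0 : 1 ≤ α) (h1 : α ≤ 2) :
    ‖Complex.exp (Complex.I * (θ:ℂ)) - 1 - Complex.I * (θ:ℂ)‖ ≤ 3 * |θ| ^ α := by
  rcases eq_or_ne θ 0 with rfl | hθ
  · simp
    positivity
  have habs : (0:ℝ) < |θ| := abs_pos.2 hθ
  rcases le_or_gt (|θ|) 1 with hle | hgt
  · have h2 : ‖Complex.exp (Complex.I * (θ:ℂ)) - 1 - Complex.I * (θ:ℂ)‖ ≤ |θ|^(2:ℕ) := by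
      have hiz : ‖Complex.I * (θ:ℂ)‖ = |θ| := by simp
      have := Complex.norm_exp_sub_one_sub_id_le (x := Complex.I * (θ:ℂ)) (by rw [hiz]; exact hle)
      rw [hiz] at this
      simpa using this
    have h3 : |θ| ^ (2:ℝ) ≤ |θ| ^ α := Real.rpow_le_rpow_of_exponent_ge habs hle h1
    rw [Real.rpow_two] at h3
    have : (|θ|^(2:ℕ) : ℝ) = |θ| * |θ| := sq (|θ|) ▸ by ring
    nlinarith [Real.rpow_nonneg (abs_nonneg θ) α]
  · have h2 : ‖Complex.exp (Complex.I * (θ:ℂ)) - 1 - Complex.I * (θ:ℂ)‖ ≤ 2 + |θ| := by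
      calc ‖Complex.exp (Complex.I * (θ:ℂ)) - 1 - Complex.I * (θ:ℂ)‖
          ≤ ‖Complex.exp (Complex.I * (θ:ℂ)) - 1‖ + ‖Complex.I * (θ:ℂ)‖ :=
            norm_sub_le _ _
      _ ≤ 2 + |θ| := by
            have := norm_sub_le (Complex.exp (Complex.I * (θ:ℂ))) 1
            have he : ‖Complex.exp (Complex.I * (θ:ℂ))‖ = 1 := by
              rw [Complex.norm_exp]; simp
            simp [he] at this ⊢
            linarith [this]
    have h3 : |θ| ≤ |θ| ^ α := by
      calc |θ| = |θ| ^ (1:ℝ) := (Real.rpow_one _).symm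
      _ ≤ |θ| ^ α := Real.rpow_le_rpow_of_exponent_le hgt.le h0
    nlinarith

section Aux
open Complex

/-- pointwise bound for the symb integrand -/
lemma integrand_bound (σ : ℝ) (ξ y : Rd d) (α : ℝ) (h0 : 0 ≤ α)
    (hcase : (chiSigma σ y = 0 ∧ 0 ≤ α ∧ α ≤ 1) ∨ (chiSigma σ y = 1 ∧ 1 ≤ α ∧ α ≤ 2)) :
    ‖Complex.exp (Complex.I * ((2 * Real.pi * ⟪ξ, y⟫ : ℝ) : ℂ))
        - 1 - Complex.I * ((2 * Real.pi * chiSigma σ y * ⟪ξ, y⟫ : ℝ) : ℂ)‖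
      ≤ 3 * ((2 * Real.pi * ‖ξ‖) ^ α * ‖y‖ ^ α) := by
  set θ : ℝ := 2 * Real.pi * ⟪ξ, y⟫ with hθ
  have key : ‖Complex.exp (Complex.I * (θ:ℂ))
        - 1 - Complex.I * ((2 * Real.pi * chiSigma σ y * ⟪ξ, y⟫ : ℝ) : ℂ)‖ ≤ 3 * |θ| ^ α := by
    rcases hcase with ⟨hχ, ha, hb⟩ | ⟨hχ, ha, hb⟩
    · have : (2 * Real.pi * chiSigma σ y * ⟪ξ, y⟫ : ℝ) = 0 := by rw [hχ]; ring
      rw [this]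
      simpa using trig0 θ α ha hb
    · have : (2 * Real.pi * chiSigma σ y * ⟪ξ, y⟫ : ℝ) = θ := by rw [hχ, hθ]; ring
      rw [this]
      exact trig1 θ α ha hb
  refine key.trans ?_
  have h1 : |θ| ≤ 2 * Real.pi * ‖ξ‖ * ‖y‖ := by
    rw [hθ, abs_mul, _root_.abs_of_nonneg (by positivity : (0:ℝ) ≤ 2 * Real.pi)]
    have := abs_real_inner_le_norm ξ y
    nlinarith [Real.pi_pos]
  have h2 : |θ| ^ α ≤ (2 * Real.pi * ‖ξ‖ * ‖y‖) ^ α :=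
    Real.rpow_le_rpow (abs_nonneg _) h1 h0
  have h3 : (2 * Real.pi * ‖ξ‖ * ‖y‖) ^ α = (2 * Real.pi * ‖ξ‖) ^ α * ‖y‖ ^ α :=
    Real.mul_rpow (by positivity) (norm_nonneg _)
  rw [h3] at h2
  linarith

lemma symb_bound (σ : ℝ) (hσ : σ ∈ Set.Ioo (0:ℝ) 2) (ν : Measure (Rd d))
    (α1 α2 N : ℝ)
    (hexp : (σ < 1 → α1 ∈ Set.Ioc (0:ℝ) 1 ∧ α2 ∈ Set.Ioc (0:ℝ) 1) ∧
            (1 < σ → α1 ∈ Set.Ioc (1:ℝ) 2 ∧ α2 ∈ Set.Ioc (1:ℝ) 2) ∧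
            (σ = 1 → α1 ∈ Set.Ioc (1:ℝ) 2 ∧ α2 ∈ Set.Ico (0:ℝ) 1))
    (hmom : (∫⁻ z in {z : Rd d | ‖z‖ ≤ 1}, ENNReal.ofReal (‖z‖ ^ α1) ∂ν)
        + (∫⁻ z in {z : Rd d | 1 < ‖z‖}, ENNReal.ofReal (‖z‖ ^ α2) ∂ν)
        ≤ ENNReal.ofReal N) (ξ : Rd d) :
    ‖symb σ ν ξ‖ ≤
      3 * ((2 * Real.pi * ‖ξ‖) ^ α1 + (2 * Real.pi * ‖ξ‖) ^ α2) * max N 0 := by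
  obtain ⟨hexp1, hexp2, hexp3⟩ := hexp
  -- basic facts about the exponents
  have hα1 : 0 < α1 ∧ α1 ≤ 2 := by
    rcases lt_trichotomy σ 1 with h | h | h
    · obtain ⟨⟨a, b⟩, _⟩ := hexp1 h; exact ⟨a, b.trans one_le_two⟩
    · obtain ⟨⟨a, b⟩, _⟩ := hexp3 h; exact ⟨lt_trans one_pos a, b⟩
    · obtain ⟨⟨a, b⟩, _⟩ := hexp2 h; exact ⟨lt_trans one_pos a, b⟩
  have hα2 : 0 ≤ α2 ∧ α2 ≤ 2 := by
    rcases lt_trichotomy σ 1 with h | h | h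
    · obtain ⟨_, a, b⟩ := hexp1 h; exact ⟨a.le, b.trans one_le_two⟩
    · obtain ⟨_, a, b⟩ := hexp3 h; exact ⟨a, b.le.trans one_le_two⟩
    · obtain ⟨_, a, b⟩ := hexp2 h; exact ⟨(lt_trans one_pos a).le, b⟩
  have hc1 : ∀ y : Rd d, ‖y‖ ≤ 1 →
      (chiSigma σ y = 0 ∧ 0 ≤ α1 ∧ α1 ≤ 1) ∨ (chiSigma σ y = 1 ∧ 1 ≤ α1 ∧ α1 ≤ 2) := by
    intro y hy
    rcases lt_trichotomy σ 1 with h | h | h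
    · obtain ⟨⟨a, b⟩, _⟩ := hexp1 h
      exact Or.inl ⟨by simp [chiSigma, h], a.le, b⟩
    · obtain ⟨⟨a, b⟩, _⟩ := hexp3 h
      exact Or.inr ⟨by simp [chiSigma, h, hy], a.le, b⟩
    · obtain ⟨⟨a, b⟩, _⟩ := hexp2 h
      exact Or.inr ⟨by simp [chiSigma, not_lt.2 h.le, ne_of_gt h], a.le, b⟩
  have hc2 : ∀ y : Rd d, ¬ (‖y‖ ≤ 1) →
      (chiSigma σ y = 0 ∧ 0 ≤ α2 ∧ α2 ≤ 1) ∨ (chiSigma σ y = 1 ∧ 1 ≤ α2 ∧ α2 ≤ 2) := by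
    intro y hy
    rcases lt_trichotomy σ 1 with h | h | h
    · obtain ⟨_, a, b⟩ := hexp1 h
      exact Or.inl ⟨by simp [chiSigma, h], a.le, b⟩
    · obtain ⟨_, a, b⟩ := hexp3 h
      exact Or.inl ⟨by simp [chiSigma, h, hy], a, b.le⟩
    · obtain ⟨_, a, b⟩ := hexp2 h
      exact Or.inr ⟨by simp [chiSigma, not_lt.2 h.le, ne_of_gt h], a.le, b⟩
  set c1 : ℝ := (2 * Real.pi * ‖ξ‖) ^ α1 with hc1def
  set c2 : ℝ := (2 * Real.pi * ‖ξ‖) ^ α2 with hc2def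
  have hc1n : 0 ≤ c1 := Real.rpow_nonneg (by positivity) _
  have hc2n : 0 ≤ c2 := Real.rpow_nonneg (by positivity) _
  set N0 : ℝ := max N 0 with hN0
  have hN0n : 0 ≤ N0 := le_max_right _ _
  set f : Rd d → ℂ := fun y =>
    Complex.exp (Complex.I * ((2 * Real.pi * ⟪ξ, y⟫ : ℝ) : ℂ))
        - 1 - Complex.I * ((2 * Real.pi * chiSigma σ y * ⟪ξ, y⟫ : ℝ) : ℂ) with hf
  have hS : MeasurableSet {y : Rd d | ‖y‖ ≤ 1} :=
    (isClosed_le continuous_norm continuous_const).measurableSet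
  have hcompl : {y : Rd d | ‖y‖ ≤ 1}ᶜ = {z : Rd d | 1 < ‖z‖} := by
    ext z; simp [not_le]
  have step1 : ‖symb σ ν ξ‖ ≤ (∫⁻ y, ENNReal.ofReal ‖f y‖ ∂ν).toReal :=
    norm_integral_le_lintegral_norm f
  have hmom1 : (∫⁻ z in {z : Rd d | ‖z‖ ≤ 1}, ENNReal.ofReal (‖z‖ ^ α1) ∂ν)
      ≤ ENNReal.ofReal N0 :=
    le_trans (le_trans le_self_add hmom) (ENNReal.ofReal_le_ofReal (le_max_left _ _))
  have hmom2 : (∫⁻ z in {z : Rd d | 1 < ‖z‖}, ENNReal.ofReal (‖z‖ ^ α2) ∂ν)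
      ≤ ENNReal.ofReal N0 :=
    le_trans (le_trans le_add_self hmom) (ENNReal.ofReal_le_ofReal (le_max_left _ _))
  have piece1 : (∫⁻ y in {y : Rd d | ‖y‖ ≤ 1}, ENNReal.ofReal ‖f y‖ ∂ν)
      ≤ ENNReal.ofReal (3 * c1) * ENNReal.ofReal N0 := by
    have hb : (∫⁻ y in {y : Rd d | ‖y‖ ≤ 1}, ENNReal.ofReal ‖f y‖ ∂ν)
        ≤ ∫⁻ y in {y : Rd d | ‖y‖ ≤ 1}, ENNReal.ofReal (3 * c1) * ENNReal.ofReal (‖y‖ ^ α1) ∂ν := by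
      refine lintegral_mono_ae (((ae_restrict_iff' hS).2 (ae_of_all _ ?_)))
      intro y hy
      rw [← ENNReal.ofReal_mul (by positivity)]
      refine ENNReal.ofReal_le_ofReal ?_
      have := integrand_bound σ ξ y α1 hα1.1.le (hc1 y hy)
      calc ‖f y‖ ≤ 3 * (c1 * ‖y‖ ^ α1) := this
        _ = 3 * c1 * ‖y‖ ^ α1 := by ring
    refine hb.trans ?_
    rw [lintegral_const_mul' _ _ ENNReal.ofReal_ne_top]
    exact mul_le_mul_right hmom1 _
  have piece2 : (∫⁻ y in {y : Rd d | ‖y‖ ≤ 1}ᶜ, ENNReal.ofReal ‖f y‖ ∂ν)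
      ≤ ENNReal.ofReal (3 * c2) * ENNReal.ofReal N0 := by
    have hb : (∫⁻ y in {y : Rd d | ‖y‖ ≤ 1}ᶜ, ENNReal.ofReal ‖f y‖ ∂ν)
        ≤ ∫⁻ y in {y : Rd d | ‖y‖ ≤ 1}ᶜ, ENNReal.ofReal (3 * c2) * ENNReal.ofReal (‖y‖ ^ α2) ∂ν := by
      refine lintegral_mono_ae (((ae_restrict_iff' hS.compl).2 (ae_of_all _ ?_)))
      intro y hy
      rw [← ENNReal.ofReal_mul (by positivity)]
      refine ENNReal.ofReal_le_ofReal ?_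
      have := integrand_bound σ ξ y α2 hα2.1 (hc2 y hy)
      calc ‖f y‖ ≤ 3 * (c2 * ‖y‖ ^ α2) := this
        _ = 3 * c2 * ‖y‖ ^ α2 := by ring
    refine hb.trans ?_
    rw [lintegral_const_mul' _ _ ENNReal.ofReal_ne_top]
    rw [hcompl]
    exact mul_le_mul_right hmom2 _
  have total : (∫⁻ y, ENNReal.ofReal ‖f y‖ ∂ν)
      ≤ ENNReal.ofReal (3 * (c1 + c2) * N0) := by
    rw [← lintegral_add_compl (fun y => ENNReal.ofReal ‖f y‖) hS]
    calc _ ≤ ENNReal.ofReal (3 * c1) * ENNReal.ofReal N0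
            + ENNReal.ofReal (3 * c2) * ENNReal.ofReal N0 := add_le_add piece1 piece2
      _ = ENNReal.ofReal (3 * (c1 + c2) * N0) := by
          rw [← ENNReal.ofReal_mul (by positivity), ← ENNReal.ofReal_mul (by positivity),
            ← ENNReal.ofReal_add (by positivity) (by positivity)]
          ring_nf
  refine step1.trans ?_
  exact ENNReal.toReal_le_of_le_ofReal (by positivity) total

lemma exp_integrable (μ : Measure (Rd d)) [IsProbabilityMeasure μ] (ξ : Rd d) :
    Integrable (fun x => Complex.exp (Complex.I * ((2 * Real.pi * ⟪ξ, x⟫ : ℝ) : ℂ))) μ := by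
  have hc : Continuous fun x : Rd d =>
      Complex.exp (Complex.I * ((2 * Real.pi * ⟪ξ, x⟫ : ℝ) : ℂ)) := by
    refine Complex.continuous_exp.comp ?_
    exact continuous_const.mul (Complex.continuous_ofReal.comp
      (continuous_const.mul (Continuous.inner continuous_const continuous_id)))
  refine Integrable.mono' (integrable_const (1:ℝ)) hc.aestronglyMeasurable ?_
  refine ae_of_all _ fun x => ?_
  rw [Complex.norm_exp]
  simp

lemma charFun_norm_le_one (μ : Measure (Rd d)) [IsProbabilityMeasure μ] (ξ : Rd d) :
    ‖_root_.charFun μ ξ‖ ≤ 1 := by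
  calc ‖_root_.charFun μ ξ‖ ≤ ∫ x, ‖Complex.exp (Complex.I * ((2 * Real.pi * ⟪ξ, x⟫ : ℝ) : ℂ))‖ ∂μ :=
        norm_integral_le_integral_norm _
  _ ≤ 1 := by
      have : ∀ x : Rd d, ‖Complex.exp (Complex.I * ((2 * Real.pi * ⟪ξ, x⟫ : ℝ) : ℂ))‖ = 1 := by
        intro x; rw [Complex.norm_exp]; simp
      simp only [this]
      simp

lemma charFun_re (μ : Measure (Rd d)) [IsProbabilityMeasure μ] (ξ : Rd d) :
    (_root_.charFun μ ξ).re = ∫ x, Real.cos (2 * Real.pi * ⟪ξ, x⟫) ∂μ := by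
  rw [_root_.charFun, ← RCLike.re_to_complex, ← integral_re (exp_integrable μ ξ)]
  congr 1
  ext x
  rw [RCLike.re_to_complex, mul_comm Complex.I, Complex.exp_ofReal_mul_I_re]

lemma truncation (μ : Measure (Rd d)) [IsProbabilityMeasure μ] (i : Fin d) (u B : ℝ)
    (hu : 0 < u)
    (hB : ∀ s : ℝ, s ∈ Set.Icc (0:ℝ) 1 →
      1 - (_root_.charFun μ (EuclideanSpace.single i (s * u))).re ≤ B) :
    μ {x : Rd d | 1 / (Real.pi * u) < |x i|} ≤ ENNReal.ofReal (2 * B) := by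
  have hπ := Real.pi_pos
  set ρ : Measure ℝ := volume.restrict (Set.Icc (0:ℝ) 1) with hρ
  haveI : IsFiniteMeasure ρ := ⟨by
    rw [hρ, Measure.restrict_apply_univ]
    simp [Real.volume_Icc]⟩
  set F : ℝ → Rd d → ℝ := fun s x => 1 - Real.cos (2 * Real.pi * u * (x i) * s) with hF
  have hproj : Continuous fun x : Rd d => x i := (EuclideanSpace.proj (𝕜 := ℝ) i).continuous
  have hFc : Continuous (Function.uncurry F) := by
    refine continuous_const.sub (Real.continuous_cos.comp ?_)
    exact (continuous_const.mul (hproj.comp continuous_snd)).mul continuous_fst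
  have hFi : Integrable (Function.uncurry F) (ρ.prod μ) := by
    refine Integrable.mono' (integrable_const (2:ℝ)) hFc.aestronglyMeasurable ?_
    refine ae_of_all _ fun p => ?_
    have h1 := Real.cos_le_one (2 * Real.pi * u * (p.2 i) * p.1)
    have h2 := Real.neg_one_le_cos (2 * Real.pi * u * (p.2 i) * p.1)
    simp only [Function.uncurry, hF, Real.norm_eq_abs]
    rw [abs_le]; constructor <;> nlinarith
  set G : Rd d → ℝ := fun x => ∫ s, F s x ∂ρ with hG
  have hG0 : ∀ x, 0 ≤ G x := by
    intro x
    refine integral_nonneg fun s => ?_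
    have := Real.cos_le_one (2 * Real.pi * u * (x i) * s)
    simp only [hF, Pi.zero_apply]; linarith
  have hG2 : ∀ x : Rd d, 1 / (Real.pi * u) < |x i| → 1 / 2 ≤ G x := by
    intro x hx
    set a : ℝ := 2 * Real.pi * u * (x i) with ha
    have hxpos : 0 < |x i| := lt_trans (by positivity) hx
    have haabs : 2 < |a| := by
      rw [ha]
      have h2 : |2 * Real.pi * u * x i| = 2 * Real.pi * u * |x i| := by
        rw [abs_mul, _root_.abs_of_nonneg (by positivity : (0:ℝ) ≤ 2 * Real.pi * u)]
      rw [h2]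
      have h4 := mul_lt_mul_of_pos_left hx (show (0:ℝ) < 2 * Real.pi * u by positivity)
      have h5 : 2 * Real.pi * u * (1 / (Real.pi * u)) = 2 := by field_simp
      linarith
    have hane : a ≠ 0 := by
      intro h; rw [h] at haabs; simp at haabs; linarith
    have hderiv : ∀ s : ℝ, HasDerivAt (fun s => s - Real.sin (a * s) / a)
        (1 - Real.cos (a * s)) s := by
      intro s
      have h1 : HasDerivAt (fun s : ℝ => a * s) a s := by
        simpa using (hasDerivAt_id s).const_mul a
      have h2 : HasDerivAt (fun s => Real.sin (a * s)) (Real.cos (a * s) * a) s :=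
        (Real.hasDerivAt_sin (a * s)).comp s h1
      have h3 : HasDerivAt (fun s => Real.sin (a * s) / a) (Real.cos (a * s) * a / a) s :=
        h2.div_const a
      have h4 : Real.cos (a * s) * a / a = Real.cos (a * s) := by field_simp
      rw [h4] at h3
      exact (hasDerivAt_id' s).sub h3
    have hcont : Continuous fun s => 1 - Real.cos (a * s) :=
      continuous_const.sub (Real.continuous_cos.comp (continuous_const.mul continuous_id))
    have hval : G x = 1 - Real.sin a / a := by
      have h1 : (∫ s in (0:ℝ)..1, (1 - Real.cos (a * s)))
          = (1 - Real.sin (a * 1) / a) - (0 - Real.sin (a * 0) / a) :=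
        intervalIntegral.integral_eq_sub_of_hasDerivAt (fun s _ => hderiv s)
          (hcont.intervalIntegrable 0 1)
      have h2 : G x = ∫ s in (0:ℝ)..1, (1 - Real.cos (a * s)) := by
        rw [intervalIntegral.integral_of_le zero_le_one, hG]
        simp only
        rw [hρ, MeasureTheory.integral_Icc_eq_integral_Ioc]
      rw [h2, h1]; simp
    rw [hval]
    have hs : |Real.sin a / a| ≤ 1 / 2 := by
      rw [abs_div, div_le_iff₀ (by linarith : (0:ℝ) < |a|)]
      have := Real.abs_sin_le_one a
      nlinarith
    have := (abs_le.1 hs).2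
    linarith
  -- Fubini
  have hswap : ∫ x, G x ∂μ = ∫ s, (∫ x, F s x ∂μ) ∂ρ :=
    (integral_integral_swap hFi).symm
  have hinner : ∀ s : ℝ, (∫ x, F s x ∂μ)
      = 1 - (_root_.charFun μ (EuclideanSpace.single i (s * u))).re := by
    intro s
    have hcosarg : ∀ x : Rd d,
        2 * Real.pi * ⟪(EuclideanSpace.single i (s * u) : Rd d), x⟫ =
          2 * Real.pi * u * (x i) * s := by
      intro x
      have : ⟪(EuclideanSpace.single i (s * u) : Rd d), x⟫ = (s * u) * x i := by
        rw [EuclideanSpace.inner_single_left]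
        simp
      rw [this]; ring
    rw [charFun_re]
    have hcosint : Integrable (fun x : Rd d => Real.cos (2 * Real.pi * u * (x i) * s)) μ := by
      refine Integrable.mono' (integrable_const (1:ℝ)) ?_ ?_
      · exact (Real.continuous_cos.comp
          ((continuous_const.mul hproj).mul continuous_const)).aestronglyMeasurable
      · exact ae_of_all _ fun x => by
          rw [Real.norm_eq_abs]; exact Real.abs_cos_le_one _
    have : (∫ x, Real.cos (2 * Real.pi * ⟪(EuclideanSpace.single i (s * u) : Rd d), x⟫) ∂μ)
        = ∫ x, Real.cos (2 * Real.pi * u * (x i) * s) ∂μ := by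
      exact integral_congr_ae (ae_of_all _ fun x => congrArg Real.cos (hcosarg x))
    rw [this, hF]
    rw [integral_sub (integrable_const 1) hcosint]
    simp
  have hGle : ∫ x, G x ∂μ ≤ B := by
    rw [hswap]
    have hint1 : Integrable (fun s => ∫ x, F s x ∂μ) ρ := by
      have := hFi.integral_prod_left
      exact this
    calc (∫ s, (∫ x, F s x ∂μ) ∂ρ) ≤ ∫ s, B ∂ρ := by
          rw [hρ]
          refine setIntegral_mono_on hint1 (integrable_const B) measurableSet_Icc ?_
          intro s hs
          rw [hinner s]
          exact hB s hs
      _ = B := by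
          rw [integral_const]
          rw [hρ, measureReal_restrict_apply_univ]
          simp [Real.volume_Icc]
  -- Chebyshev
  set A : Set (Rd d) := {x : Rd d | 1 / (Real.pi * u) < |x i|} with hA
  have hAmeas : MeasurableSet A :=
    measurableSet_lt measurable_const hproj.measurable.abs
  have hGint : Integrable G μ := hFi.integral_prod_right
  have hch : (μ A).toReal * (1 / 2) ≤ ∫ x, G x ∂μ := by
    calc (μ A).toReal * (1 / 2) = ∫ _ in A, (1/2 : ℝ) ∂μ := by
          rw [setIntegral_const]; rfl
      _ ≤ ∫ x in A, G x ∂μ := by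
          refine setIntegral_mono_on (integrableOn_const (measure_ne_top μ A))
            hGint.integrableOn hAmeas ?_
          intro x hx
          exact hG2 x hx
      _ ≤ ∫ x, G x ∂μ := setIntegral_le_integral hGint (ae_of_all _ hG0)
  have htoReal : (μ A).toReal ≤ 2 * B := by linarith [hGle, hch]
  have h2B : 0 ≤ 2 * B := le_trans ENNReal.toReal_nonneg htoReal
  exact (ENNReal.le_ofReal_iff_toReal_le (measure_ne_top μ A) h2B).2 htoReal

end Aux

theorem statement_8 (d : ℕ) (σ : ℝ) (hσ : σ ∈ Set.Ioo (0:ℝ) 2)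
    (ν : Measure (Rd d)) (hν : MemA σ ν)
    (α1 α2 N : ℝ)
    (hexp : (σ < 1 → α1 ∈ Set.Ioc (0:ℝ) 1 ∧ α2 ∈ Set.Ioc (0:ℝ) 1) ∧
            (1 < σ → α1 ∈ Set.Ioc (1:ℝ) 2 ∧ α2 ∈ Set.Ioc (1:ℝ) 2) ∧
            (σ = 1 → α1 ∈ Set.Ioc (1:ℝ) 2 ∧ α2 ∈ Set.Ico (0:ℝ) 1))
    (hmom : (∫⁻ z in {z : Rd d | ‖z‖ ≤ 1}, ENNReal.ofReal (‖z‖ ^ α1) ∂ν)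
        + (∫⁻ z in {z : Rd d | 1 < ‖z‖}, ENNReal.ofReal (‖z‖ ^ α2) ∂ν)
        ≤ ENNReal.ofReal N) :
    ∀ δ : ℝ, 0 < δ → ∃ C : ℝ, 0 < C ∧
      ∀ t : ℝ, 0 < t → ∀ μ : Measure (Rd d), IsProbabilityMeasure μ →
        (∀ ξ, _root_.charFun μ ξ = Complex.exp ((t : ℂ) * symb σ ν ξ)) →
        μ {y : Rd d | δ < ‖y‖} ≤ ENNReal.ofReal (C * t) := by
  intro δ hδ
  have hπ := Real.pi_pos
  -- exponents nonneg
  obtain ⟨hexp1, hexp2, hexp3⟩ := hexp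
  have hα1 : 0 ≤ α1 := by
    rcases lt_trichotomy σ 1 with h | h | h
    · exact (hexp1 h).1.1.le
    · exact (lt_trans one_pos (hexp3 h).1.1).le
    · exact (lt_trans one_pos (hexp2 h).1.1).le
  have hα2 : 0 ≤ α2 := by
    rcases lt_trichotomy σ 1 with h | h | h
    · exact (hexp1 h).2.1.le
    · exact (hexp3 h).2.1
    · exact (lt_trans one_pos (hexp2 h).2.1).le
  set u : ℝ := (Real.sqrt d + 1) / (Real.pi * δ) with hudef
  have hu : 0 < u := by
    have : (0:ℝ) ≤ Real.sqrt d := Real.sqrt_nonneg _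
    positivity
  set K : ℝ := 3 * ((2 * Real.pi * u) ^ α1 + (2 * Real.pi * u) ^ α2) * max N 0 with hKdef
  have hK0 : 0 ≤ K := by positivity
  refine ⟨4 * d * K + 1, by positivity, ?_⟩
  intro t ht μ hμ hchar
  -- step 1 : uniform bound on 1 - Re φ for ‖ξ‖ ≤ u
  have step1 : ∀ ξ : Rd d, ‖ξ‖ ≤ u → 1 - (_root_.charFun μ ξ).re ≤ 2 * t * K := by
    intro ξ hξ
    have hψ : ‖symb σ ν ξ‖ ≤ K := by
      refine (symb_bound σ hσ ν α1 α2 N ⟨hexp1, hexp2, hexp3⟩ hmom ξ).trans ?_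
      rw [hKdef]
      have hb1 : (2 * Real.pi * ‖ξ‖) ^ α1 ≤ (2 * Real.pi * u) ^ α1 :=
        Real.rpow_le_rpow (by positivity) (by nlinarith [norm_nonneg ξ]) hα1
      have hb2 : (2 * Real.pi * ‖ξ‖) ^ α2 ≤ (2 * Real.pi * u) ^ α2 :=
        Real.rpow_le_rpow (by positivity) (by nlinarith [norm_nonneg ξ]) hα2
      have hN0 : (0:ℝ) ≤ max N 0 := le_max_right _ _
      nlinarith [Real.rpow_nonneg (by positivity : (0:ℝ) ≤ 2 * Real.pi * ‖ξ‖) α1,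
        Real.rpow_nonneg (by positivity : (0:ℝ) ≤ 2 * Real.pi * ‖ξ‖) α2]
    have h1 : 1 - (_root_.charFun μ ξ).re ≤ ‖_root_.charFun μ ξ - 1‖ := by
      have h2 : (1 - _root_.charFun μ ξ).re ≤ ‖1 - _root_.charFun μ ξ‖ := Complex.re_le_norm _
      rw [Complex.sub_re, Complex.one_re] at h2
      rw [norm_sub_rev] at h2
      exact h2
    refine h1.trans ?_
    rw [hchar ξ]
    have hznorm : ‖(t : ℂ) * symb σ ν ξ‖ = t * ‖symb σ ν ξ‖ := by
      rw [norm_mul, Complex.norm_real, Real.norm_eq_abs, abs_of_pos ht]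
    rcases le_or_gt ‖(t : ℂ) * symb σ ν ξ‖ 1 with hle | hgt
    · have := Complex.norm_exp_sub_one_le (x := (t : ℂ) * symb σ ν ξ)
        (by exact hle)
      refine this.trans ?_
      rw [hznorm]
      nlinarith
    · have h3 : ‖Complex.exp ((t : ℂ) * symb σ ν ξ) - 1‖ ≤ 2 := by
        calc ‖Complex.exp ((t : ℂ) * symb σ ν ξ) - 1‖
            ≤ ‖Complex.exp ((t : ℂ) * symb σ ν ξ)‖ + 1 := by
              simpa using norm_sub_le (Complex.exp ((t : ℂ) * symb σ ν ξ)) 1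
        _ ≤ 2 := by
              rw [← hchar ξ]
              linarith [charFun_norm_le_one μ ξ]
      refine h3.trans ?_
      rw [hznorm] at hgt
      nlinarith
  -- step 2 : coordinatewise tail bound
  have step2 : ∀ i : Fin d,
      μ {x : Rd d | 1 / (Real.pi * u) < |x i|} ≤ ENNReal.ofReal (2 * (2 * t * K)) := by
    intro i
    refine truncation μ i u (2 * t * K) hu ?_
    intro s hs
    refine step1 _ ?_
    rw [EuclideanSpace.norm_single, Real.norm_eq_abs,
      _root_.abs_of_nonneg (mul_nonneg hs.1 hu.le)]
    calc s * u ≤ 1 * u := mul_le_mul_of_nonneg_right hs.2 hu.le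
    _ = u := one_mul u
  -- step 3 : covering
  have hc : 1 / (Real.pi * u) = δ / (Real.sqrt d + 1) := by
    rw [hudef]
    have h0 : (0:ℝ) < Real.sqrt d + 1 := by positivity
    field_simp
  have step3 : {y : Rd d | δ < ‖y‖} ⊆ ⋃ i : Fin d, {x : Rd d | 1 / (Real.pi * u) < |x i|} := by
    intro y hy
    simp only [Set.mem_setOf_eq] at hy
    by_contra hcon
    simp only [Set.mem_iUnion, Set.mem_setOf_eq, not_exists, not_lt] at hcon
    set c : ℝ := 1 / (Real.pi * u) with hcdef
    have hcpos : 0 < c := by positivity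
    have hnorm : ‖y‖ ≤ Real.sqrt d * c := by
      rw [EuclideanSpace.norm_eq]
      have hsum : (∑ i : Fin d, ‖y i‖ ^ 2) ≤ ∑ _i : Fin d, c ^ 2 := by
        refine Finset.sum_le_sum fun i _ => ?_
        have := hcon i
        rw [Real.norm_eq_abs]
        nlinarith [abs_nonneg (y i)]
      have hsum2 : (∑ _i : Fin d, c ^ 2 : ℝ) = d * c ^ 2 := by
        simp [Finset.sum_const, mul_comm]
      have h4 : Real.sqrt (∑ i : Fin d, ‖y i‖ ^ 2) ≤ Real.sqrt (d * c ^ 2) :=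
        Real.sqrt_le_sqrt (by rw [← hsum2]; exact hsum)
      refine h4.trans ?_
      have : (d : ℝ) * c ^ 2 = (Real.sqrt d * c) ^ 2 := by
        rw [mul_pow, Real.sq_sqrt (Nat.cast_nonneg d)]
      rw [this, Real.sqrt_sq (by positivity)]
    have hlast : Real.sqrt d * c < δ := by
      have h5 : (0:ℝ) < Real.sqrt d + 1 := by positivity
      have h6 : Real.sqrt d / (Real.sqrt d + 1) < 1 :=
        (div_lt_one h5).2 (by linarith [Real.sqrt_nonneg (d:ℝ)])
      calc Real.sqrt d * c = δ * (Real.sqrt d / (Real.sqrt d + 1)) := by rw [hc]; ring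
      _ < δ * 1 := mul_lt_mul_of_pos_left h6 hδ
      _ = δ := mul_one δ
    linarith
  -- step 4 : conclude
  calc μ {y : Rd d | δ < ‖y‖} ≤ μ (⋃ i : Fin d, {x : Rd d | 1 / (Real.pi * u) < |x i|}) :=
        measure_mono step3
  _ ≤ ∑ i : Fin d, μ {x : Rd d | 1 / (Real.pi * u) < |x i|} := by
        exact measure_iUnion_fintype_le μ _
  _ ≤ ∑ _i : Fin d, ENNReal.ofReal (2 * (2 * t * K)) := Finset.sum_le_sum fun i _ => step2 i
  _ = (d : ℝ≥0∞) * ENNReal.ofReal (2 * (2 * t * K)) := by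
        simp [Finset.sum_const, mul_comm]
  _ ≤ ENNReal.ofReal ((4 * d * K + 1) * t) := by
        rw [← ENNReal.ofReal_natCast d, ← ENNReal.ofReal_mul (by positivity)]
        refine ENNReal.ofReal_le_ofReal ?_
        nlinarith [hK0, ht.le]
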